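/- Let A ∈ M₂(ℝ) with A ≠ 0 and det A = 0, and let a₀, a₁ be real numbers with 4a₀ − a₁² > 0. Then the equation X² + a₁X + a₀I = A has no solution X ∈ M₂(ℝ). -/
import Mathlib

/-- Cayley–Hamilton for 2×2 real matrices, entrywise. -/
lemma ch_two (M : Matrix (Fin 2) (Fin 2) ℝ) :
    M ^ 2 = M.trace • M - M.det • (1 : Matrix (Fin 2) (Fin 2) ℝ) := by
  ext i j
  fin_cases i <;> fin_cases j <;>
    simp [pow_two, Matrix.mul_apply, Matrix.trace, Matrix.det_fin_two,
      Fin.sum_univ_two, Matrix.one_apply] <;> ring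

theorem stmt_17 (A : Matrix (Fin 2) (Fin 2) ℝ) (hA : A ≠ 0) (hdet : A.det = 0)
    (a₀ a₁ : ℝ) (h : 0 < 4 * a₀ - a₁ ^ 2) :
    ¬ ∃ X : Matrix (Fin 2) (Fin 2) ℝ,
      X ^ 2 + a₁ • X + a₀ • (1 : Matrix (Fin 2) (Fin 2) ℝ) = A := by
  rintro ⟨X, hX⟩
  set c : ℝ := a₀ - a₁ ^ 2 / 4 with hc
  have hcpos : 0 < c := by rw [hc]; linarith
  set Y : Matrix (Fin 2) (Fin 2) ℝ := X + (a₁ / 2) • 1 with hY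
  have hY2 : Y ^ 2 = A - c • (1 : Matrix (Fin 2) (Fin 2) ℝ) := by
    have expand : Y ^ 2 = X ^ 2 + a₁ • X + (a₁ ^ 2 / 4) • (1 : Matrix (Fin 2) (Fin 2) ℝ) := by
      rw [hY, pow_two, pow_two]
      simp only [add_mul, mul_add, smul_mul_assoc, mul_smul_comm, smul_smul, mul_one, one_mul]
      module
    rw [expand, hc]
    rw [show X ^ 2 + a₁ • X = A - a₀ • (1 : Matrix (Fin 2) (Fin 2) ℝ) by
      rw [← hX]; abel]
    module
  set t : ℝ := Y.trace with ht
  set d : ℝ := Y.det with hd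
  have hCH : Y ^ 2 = t • Y - d • (1 : Matrix (Fin 2) (Fin 2) ℝ) := ch_two Y
  have h1 : t • Y = A + (d - c) • (1 : Matrix (Fin 2) (Fin 2) ℝ) := by
    have := hCH.symm.trans hY2
    linear_combination (norm := module) this
  by_cases htz : t = 0
  · -- then A = (c - d) • 1, det gives c = d, so A = 0
    rw [htz, zero_smul] at h1
    have hAeq : A = (c - d) • (1 : Matrix (Fin 2) (Fin 2) ℝ) := by
      have h2 : A + (d - c) • (1 : Matrix (Fin 2) (Fin 2) ℝ) = 0 := h1.symm
      have h3 := eq_neg_of_add_eq_zero_left h2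
      rw [h3]; module
    have : ((c - d) ^ 2 : ℝ) = 0 := by
      have := hdet
      rw [hAeq] at this
      simpa [Matrix.det_smul, pow_two] using this
    have hcd : c = d := by nlinarith
    apply hA
    rw [hAeq, hcd, sub_self, zero_smul]
  · -- square h1
    have hsq : (t • Y) * (t • Y)
        = (A + (d - c) • 1) * (A + (d - c) • (1 : Matrix (Fin 2) (Fin 2) ℝ)) := by
      rw [h1]
    have hAA : A * A = A.trace • A := by
      have := ch_two A
      rw [pow_two] at this
      rw [this, hdet, zero_smul, sub_zero]
    have hL : (t • Y) * (t • Y) = (t ^ 2) • A - (c * t ^ 2) • (1 : Matrix (Fin 2) (Fin 2) ℝ) := by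
      have : (t • Y) * (t • Y) = (t ^ 2) • (Y ^ 2) := by
        rw [pow_two, smul_mul_assoc, mul_smul_comm, smul_smul, pow_two]
      rw [this, hY2]
      module
    have hR : (A + (d - c) • 1) * (A + (d - c) • (1 : Matrix (Fin 2) (Fin 2) ℝ))
        = (A.trace + 2 * (d - c)) • A + ((d - c) ^ 2) • (1 : Matrix (Fin 2) (Fin 2) ℝ) := by
      simp only [add_mul, mul_add, smul_mul_assoc, mul_smul_comm, smul_smul, mul_one, one_mul,
        hAA]
      module
    have hkey : (t ^ 2 - A.trace - 2 * (d - c)) • A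
        = ((d - c) ^ 2 + c * t ^ 2) • (1 : Matrix (Fin 2) (Fin 2) ℝ) := by
      have := hsq
      rw [hL, hR] at this
      linear_combination (norm := module) this
    have hdetkey : ((t ^ 2 - A.trace - 2 * (d - c)) ^ 2) * A.det
        = ((d - c) ^ 2 + c * t ^ 2) ^ 2 := by
      have := congrArg Matrix.det hkey
      simpa [Matrix.det_smul, pow_two] using this
    rw [hdet, mul_zero] at hdetkey
    have hβ : 0 < (d - c) ^ 2 + c * t ^ 2 := by positivity
    nlinarith [pow_pos hβ 2]
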